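/- arXiv:1403.5647 — 2 statements merged into one kernel-verified Lean document; each statement's English description precedes it below -/
import Mathlib

section
/- Let M = U Σ Vᵀ be the SVD of M ∈ ℝ^(n×m), partitioned so that Σ₂ contains singular values σ_{r+1} ≥ … . Let Ω ∈ ℝ^(m×d} be a test matrix, Ω₁ = V₁ᵀΩ, Ω₂ = V₂ᵀΩ. If λ_min(Ω₁Ω₁ᵀ) ≥ d/(2m) and ‖Ω₂‖₂ ≤ 1, then ‖M − P_Y M‖₂² ≤ σ_{r+1}²(1 + 2m/d), where Y = MΩ and P_Y projects onto the column span of Y. -/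
open Matrix
open scoped Matrix.Norms.L2Operator

set_option linter.unusedSectionVars false

section helpers
variable {α β : Type*} [Fintype α] [Fintype β] [DecidableEq α] [DecidableEq β]

lemma euc_nsq (v : EuclideanSpace ℝ α) : ‖v‖ ^ 2 = ∑ i, v i ^ 2 := by
  rw [EuclideanSpace.norm_eq, Real.sq_sqrt (by positivity)]
  simp [sq_abs]

lemma opnorm_le (A : Matrix α β ℝ) (C : ℝ) (hC : 0 ≤ C)
    (h : ∀ x : β → ℝ, ∑ i, (A *ᵥ x) i ^ 2 ≤ C ^ 2 * ∑ i, x i ^ 2) : ‖A‖ ≤ C := by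
  rw [Matrix.l2_opNorm_def]
  refine ContinuousLinearMap.opNorm_le_bound _ hC fun x => ?_
  rw [LinearEquiv.trans_apply, LinearMap.coe_toContinuousLinearMap',
    Matrix.toEuclideanLin_apply]
  have key : ‖(WithLp.equiv 2 (α → ℝ)).symm (A *ᵥ (WithLp.equiv 2 (β → ℝ)) x)‖ ^ 2
      ≤ (C * ‖x‖) ^ 2 := by
    rw [euc_nsq]
    change ∑ i, (A *ᵥ (WithLp.equiv 2 (β → ℝ)) x) i ^ 2 ≤ _
    calc ∑ i, (A *ᵥ (WithLp.equiv 2 (β → ℝ)) x) i ^ 2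
        ≤ C ^ 2 * ∑ i, ((WithLp.equiv 2 (β → ℝ)) x) i ^ 2 := h _
      _ = (C * ‖x‖) ^ 2 := by
          rw [mul_pow, euc_nsq x]
          rfl
  exact (pow_le_pow_iff_left₀ (norm_nonneg _) (by positivity) two_ne_zero).mp key

lemma mulVec_nsq_le (A : Matrix α β ℝ) (x : β → ℝ) :
    ∑ i, (A *ᵥ x) i ^ 2 ≤ ‖A‖ ^ 2 * ∑ i, x i ^ 2 := by
  have h := Matrix.l2_opNorm_mulVec A ((WithLp.equiv 2 _).symm x)
  have h2 := pow_le_pow_left₀ (norm_nonneg _) h 2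
  rw [euc_nsq] at h2
  change ∑ i, (A *ᵥ x) i ^ 2 ≤ _ at h2
  calc ∑ i, (A *ᵥ x) i ^ 2
      ≤ (‖A‖ * ‖(WithLp.equiv 2 (β → ℝ)).symm x‖) ^ 2 := h2
    _ = ‖A‖ ^ 2 * ∑ i, x i ^ 2 := by
        rw [mul_pow, euc_nsq]
        rfl

lemma real_ct (A : Matrix α β ℝ) : Aᴴ = Aᵀ := by
  ext i j; simp [Matrix.conjTranspose_apply]

lemma orth_nsq {k : Type*} [Fintype k] [DecidableEq k] (W : Matrix k k ℝ) (hW : Wᵀ * W = 1) (w : k → ℝ) :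
    ∑ i, (W *ᵥ w) i ^ 2 = ∑ i, w i ^ 2 := by
  have h1 : (W *ᵥ w) ⬝ᵥ (W *ᵥ w) = w ⬝ᵥ w := by
    rw [Matrix.dotProduct_mulVec, ← Matrix.mulVec_transpose, Matrix.mulVec_mulVec, hW,
      Matrix.one_mulVec]
  simpa [dotProduct, sq] using h1

end helpers

theorem randomized_range_finder_error {n m d r : ℕ} (hd : 0 < d) (hm : 0 < m)
    (hr : r < m) (hmn : m ≤ n)
    (M : Matrix (Fin n) (Fin m) ℝ)
    (U : Matrix (Fin n) (Fin n) ℝ) (V : Matrix (Fin m) (Fin m) ℝ)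
    (σ : Fin m → ℝ)
    (hU : Uᵀ * U = 1) (hV : Vᵀ * V = 1)
    (hσpos : ∀ i, 0 ≤ σ i) (hσdesc : Antitone σ)
    (hSVD : M = U * (Matrix.of fun (i : Fin n) (j : Fin m) => if (i : ℕ) = (j : ℕ) then σ j else 0) * Vᵀ)
    (Ω : Matrix (Fin m) (Fin d) ℝ)
    -- V₁ consists of the first r columns of V, V₂ of the remaining ones
    (V₁ : Matrix (Fin m) (Fin r) ℝ) (hV₁ : V₁ = V.submatrix id (Fin.castLE hr.le))
    (V₂ : Matrix (Fin m) (Fin (m - r)) ℝ)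
    (hV₂ : V₂ = V.submatrix id (fun j : Fin (m - r) => (⟨r + (j : ℕ), by omega⟩ : Fin m)))
    (Ω₁ : Matrix (Fin r) (Fin d) ℝ) (hΩ₁ : Ω₁ = V₁ᵀ * Ω)
    (Ω₂ : Matrix (Fin (m - r)) (Fin d) ℝ) (hΩ₂ : Ω₂ = V₂ᵀ * Ω)
    -- λ_min(Ω₁Ω₁ᵀ) ≥ d/(2m), stated via the Rayleigh quotient
    (hlammin : ∀ x : Fin r → ℝ,
      ((d : ℝ) / (2 * m)) * (∑ i, x i ^ 2) ≤ x ⬝ᵥ ((Ω₁ * Ω₁ᵀ) *ᵥ x))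
    (hΩ₂norm : ‖Ω₂‖ ≤ 1)
    -- P is the orthogonal projection onto the column span of Y = MΩ
    (P : Matrix (Fin n) (Fin n) ℝ) (hPsymm : P.IsSymm) (hPidem : P * P = P)
    (hPrange : LinearMap.range P.mulVecLin = LinearMap.range (M * Ω).mulVecLin) :
    ‖M - P * M‖ ^ 2 ≤ σ ⟨r, hr⟩ ^ 2 * (1 + 2 * (m : ℝ) / d) := by

  classical
  set Q : Matrix (Fin n) (Fin n) ℝ := 1 - P with hQ
  set S : Matrix (Fin n) (Fin m) ℝ :=
    Matrix.of fun (i : Fin n) (j : Fin m) => if (i : ℕ) = (j : ℕ) then σ j else 0 with hS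
  have hQsymm : Qᵀ = Q := by
    rw [hQ, Matrix.transpose_sub, Matrix.transpose_one, hPsymm]
  have hQidem : Q * Q = Q := by
    rw [hQ]; rw [Matrix.IsSymm] at hPsymm
    simp only [Matrix.sub_mul, Matrix.mul_sub, Matrix.one_mul, Matrix.mul_one, hPidem]
    abel
  -- P fixes range of M * Ω
  have hPMΩ : P * (M * Ω) = M * Ω := by
    have key : ∀ u : Fin d → ℝ, P *ᵥ ((M * Ω) *ᵥ u) = (M * Ω) *ᵥ u := by
      intro u
      have : (M * Ω) *ᵥ u ∈ LinearMap.range P.mulVecLin := by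
        rw [hPrange]; exact ⟨u, rfl⟩
      obtain ⟨v, hv⟩ := this
      rw [← hv]
      show P *ᵥ (P *ᵥ v) = P *ᵥ v
      rw [Matrix.mulVec_mulVec, hPidem]
    ext i j
    have := congrFun (key (Pi.single j 1)) i
    rw [Matrix.mulVec_mulVec] at this
    simpa [Matrix.mulVec_single] using this
  have hQMΩ : Q * (M * Ω) = 0 := by
    rw [hQ, Matrix.sub_mul, Matrix.one_mul, hPMΩ, sub_self]
  have hΩMQ : Ωᵀ * (Mᵀ * Q) = 0 := by
    have := congrArg Matrix.transpose hQMΩ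
    rw [Matrix.transpose_zero] at this
    calc Ωᵀ * (Mᵀ * Q) = (Q * (M * Ω))ᵀ := by
          rw [Matrix.transpose_mul, Matrix.transpose_mul, hQsymm, Matrix.mul_assoc]
      _ = 0 := this
  -- reduce to bounding ‖Mᵀ * Q‖
  have hMT : Mᵀ = V * (Sᵀ * Uᵀ) := by
    rw [hSVD]
    simp only [Matrix.transpose_mul, Matrix.transpose_transpose, hS, Matrix.mul_assoc]
  have h1M : M - P * M = Q * M := by rw [hQ, Matrix.sub_mul, Matrix.one_mul]
  have hnorm_eq : ‖M - P * M‖ = ‖Mᵀ * Q‖ := by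
    rw [h1M, ← Matrix.l2_opNorm_conjTranspose (Q * M), real_ct, Matrix.transpose_mul, hQsymm]
  set K : ℝ := σ ⟨r, hr⟩ ^ 2 * (1 + 2 * (m : ℝ) / d) with hK
  have hKnn : (0:ℝ) ≤ K := by positivity
  have hmain : ‖Mᵀ * Q‖ ≤ Real.sqrt K := by
    apply opnorm_le _ _ (Real.sqrt_nonneg _)
    intro x
    rw [Real.sq_sqrt hKnn]
    set y : Fin n → ℝ := Q *ᵥ x with hy
    set c : Fin n → ℝ := Uᵀ *ᵥ y with hc
    set w : Fin m → ℝ := Sᵀ *ᵥ c with hw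
    have hzw : (Mᵀ * Q) *ᵥ x = V *ᵥ w := by
      rw [← Matrix.mulVec_mulVec, hMT, ← Matrix.mulVec_mulVec, ← Matrix.mulVec_mulVec]
    have hwj : ∀ j : Fin m, w j = σ j * c (Fin.castLE hmn j) := by
      intro j
      have e0 : w j = ∑ i : Fin n, (if (i : ℕ) = (j : ℕ) then σ j else 0) * c i := by
        simp [hw, Matrix.mulVec, dotProduct, hS, Matrix.transpose_apply]
      rw [e0, Finset.sum_eq_single (Fin.castLE hmn j)]
      · simp
      · intro i _ hne
        have hne2 : (i : ℕ) ≠ (j : ℕ) := fun h => hne (Fin.ext (by simpa using h))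
        simp [hne2]
      · intro h; exact absurd (Finset.mem_univ _) h
    set a : Fin r → ℝ := fun i => w (Fin.castLE hr.le i) with ha
    set b : Fin (m - r) → ℝ := fun j => w (⟨r + (j:ℕ), by omega⟩ : Fin m) with hb
    have hsplit : ∀ f : Fin m → ℝ, ∑ j, f j =
        (∑ i : Fin r, f (Fin.castLE hr.le i)) +
          ∑ j : Fin (m - r), f (⟨r + (j:ℕ), by omega⟩ : Fin m) := by
      intro f
      have hmr : r + (m - r) = m := by omega
      have e1 : ∑ j : Fin m, f j = ∑ j : Fin (r + (m - r)), f (finCongr hmr j) :=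
        (Fintype.sum_equiv (finCongr hmr) _ f (fun j => rfl)).symm
      rw [e1, Fin.sum_univ_add]
      first
      | rfl
      | (congr 1
         · exact Finset.sum_congr rfl fun i _ => congrArg f (Fin.ext (by simp))
         · exact Finset.sum_congr rfl fun j _ => congrArg f (Fin.ext (by simp)))
    have hczero : (Ωᵀ * V) *ᵥ w = 0 := by
      have h0 : (Ωᵀ * (Mᵀ * Q)) *ᵥ x = 0 := by rw [hΩMQ, Matrix.zero_mulVec]
      rw [← Matrix.mulVec_mulVec, hzw, Matrix.mulVec_mulVec] at h0
      exact h0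
    have hcon : Ω₁ᵀ *ᵥ a = -(Ω₂ᵀ *ᵥ b) := by
      funext k
      have h0 := congrFun hczero k
      have e : ((Ωᵀ * V) *ᵥ w) k = (Ω₁ᵀ *ᵥ a) k + (Ω₂ᵀ *ᵥ b) k := by
        have e1 : ((Ωᵀ * V) *ᵥ w) k = ∑ j, (Ωᵀ * V) k j * w j := by
          simp [Matrix.mulVec, dotProduct]
        rw [e1, hsplit (fun j => (Ωᵀ * V) k j * w j)]
        congr 1
        · refine Finset.sum_congr rfl fun i _ => ?_
          simp only [Matrix.mulVec, dotProduct, Matrix.transpose_apply, hΩ₁, hV₁,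
            Matrix.mul_apply, Matrix.submatrix_apply, id_eq, Finset.sum_mul]
          exact Finset.sum_congr rfl fun l _ => by ring
        · refine Finset.sum_congr rfl fun j _ => ?_
          simp only [Matrix.mulVec, dotProduct, Matrix.transpose_apply, hΩ₂, hV₂,
            Matrix.mul_apply, Matrix.submatrix_apply, id_eq, Finset.sum_mul]
          exact Finset.sum_congr rfl fun l _ => by ring
      rw [e] at h0
      have : (0 : Fin d → ℝ) k = 0 := rfl
      rw [this] at h0
      have : (Ω₁ᵀ *ᵥ a) k = -((Ω₂ᵀ *ᵥ b) k) := by linarith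
      simpa using this
    -- the two key quantitative bounds
    have ha2 : ∑ i, a i ^ 2 ≤ (2 * (m:ℝ) / d) * ∑ j, b j ^ 2 := by
      have h1 := hlammin a
      have h2 : a ⬝ᵥ ((Ω₁ * Ω₁ᵀ) *ᵥ a) = ∑ k, (Ω₁ᵀ *ᵥ a) k ^ 2 := by
        rw [← Matrix.mulVec_mulVec, Matrix.dotProduct_mulVec, ← Matrix.mulVec_transpose]
        simp [dotProduct, sq]
      have h3 : ∑ k, (Ω₁ᵀ *ᵥ a) k ^ 2 = ∑ k, (Ω₂ᵀ *ᵥ b) k ^ 2 := by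
        rw [hcon]; simp
      have h4 : ∑ k, (Ω₂ᵀ *ᵥ b) k ^ 2 ≤ ‖Ω₂ᵀ‖ ^ 2 * ∑ j, b j ^ 2 := mulVec_nsq_le _ _
      have h5 : ‖Ω₂ᵀ‖ ≤ 1 := by
        rw [← real_ct, Matrix.l2_opNorm_conjTranspose]; exact hΩ₂norm
      have h6 : ‖Ω₂ᵀ‖ ^ 2 * ∑ j, b j ^ 2 ≤ ∑ j, b j ^ 2 := by
        have hle : ‖Ω₂ᵀ‖ ^ 2 ≤ 1 := by
          have := pow_le_pow_left₀ (norm_nonneg Ω₂ᵀ) h5 2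
          simpa using this
        exact mul_le_of_le_one_left
          (Finset.sum_nonneg fun j _ => sq_nonneg (b j)) hle
      have key : ((d:ℝ) / (2 * m)) * ∑ i, a i ^ 2 ≤ ∑ j, b j ^ 2 := by
        calc ((d:ℝ) / (2 * m)) * ∑ i, a i ^ 2 ≤ a ⬝ᵥ ((Ω₁ * Ω₁ᵀ) *ᵥ a) := h1
          _ = ∑ k, (Ω₂ᵀ *ᵥ b) k ^ 2 := by rw [h2, h3]
          _ ≤ ∑ j, b j ^ 2 := le_trans h4 h6
      have hd0 : (0:ℝ) < d := by exact_mod_cast hd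
      have hm0 : (0:ℝ) < m := by exact_mod_cast hm
      have := mul_le_mul_of_nonneg_left key (by positivity : (0:ℝ) ≤ 2 * (m:ℝ) / d)
      have hone : (2 * (m:ℝ) / d) * ((d:ℝ) / (2 * m)) = 1 := by field_simp
      calc ∑ i, a i ^ 2 = (2 * (m:ℝ) / d) * (((d:ℝ) / (2 * m)) * ∑ i, a i ^ 2) := by
            rw [← mul_assoc, hone, one_mul]
        _ ≤ (2 * (m:ℝ) / d) * ∑ j, b j ^ 2 := this
    have hyx : ∑ i, y i ^ 2 ≤ ∑ i, x i ^ 2 := by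
      have hQy : Q *ᵥ y = y := by rw [hy, Matrix.mulVec_mulVec, hQidem]
      have hyy : y ⬝ᵥ y = y ⬝ᵥ x := by
        calc y ⬝ᵥ y = y ⬝ᵥ (Q *ᵥ x) := rfl
          _ = (y ᵥ* Q) ⬝ᵥ x := Matrix.dotProduct_mulVec _ _ _
          _ = (Qᵀ *ᵥ y) ⬝ᵥ x := by rw [Matrix.mulVec_transpose]
          _ = y ⬝ᵥ x := by rw [hQsymm, hQy]
      have hyy2 : ∑ i, y i ^ 2 = ∑ i, y i * x i := by
        simpa [dotProduct, sq] using hyy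
      have hcs := Finset.sum_mul_sq_le_sq_mul_sq Finset.univ y x
      rcases eq_or_lt_of_le (Finset.sum_nonneg fun i (_ : i ∈ Finset.univ) =>
          sq_nonneg (y i)) with h | h
      · rw [← h]
        exact Finset.sum_nonneg fun i _ => sq_nonneg (x i)
      · have h2 : (∑ i, y i ^ 2) * (∑ i, y i ^ 2) ≤ (∑ i, y i ^ 2) * ∑ i, x i ^ 2 := by
          calc (∑ i, y i ^ 2) * (∑ i, y i ^ 2) = (∑ i, y i * x i) ^ 2 := by
                rw [← hyy2]; ring
            _ ≤ (∑ i, y i ^ 2) * ∑ i, x i ^ 2 := hcs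
        exact le_of_mul_le_mul_left h2 h
    have hcx : ∑ i, c i ^ 2 ≤ ∑ i, x i ^ 2 := by
      have hUU : U * Uᵀ = 1 := mul_eq_one_comm.mp hU
      have : ∑ i, c i ^ 2 = ∑ i, y i ^ 2 :=
        orth_nsq Uᵀ (by rw [Matrix.transpose_transpose, hUU]) y
      linarith
    have hbb : ∑ j, b j ^ 2 ≤ σ ⟨r, hr⟩ ^ 2 * ∑ i, x i ^ 2 := by
      have h1 : ∀ j : Fin (m - r),
          b j ^ 2 ≤ σ ⟨r, hr⟩ ^ 2 * c (Fin.castLE hmn (⟨r + (j:ℕ), by omega⟩ : Fin m)) ^ 2 := by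
        intro j
        have hwj2 := hwj (⟨r + (j:ℕ), by omega⟩ : Fin m)
        have hσle : σ (⟨r + (j:ℕ), by omega⟩ : Fin m) ≤ σ ⟨r, hr⟩ :=
          hσdesc (by simp [Fin.le_def])
        have hσnn := hσpos (⟨r + (j:ℕ), by omega⟩ : Fin m)
        have : b j = σ (⟨r + (j:ℕ), by omega⟩ : Fin m) *
            c (Fin.castLE hmn (⟨r + (j:ℕ), by omega⟩ : Fin m)) := hwj2
        rw [this, mul_pow]
        exact mul_le_mul_of_nonneg_right (pow_le_pow_left₀ hσnn hσle 2) (sq_nonneg _)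
      have h2 : ∑ j : Fin (m - r), c (Fin.castLE hmn (⟨r + (j:ℕ), by omega⟩ : Fin m)) ^ 2
          ≤ ∑ i, c i ^ 2 := by
        have hinj : ∀ j : Fin (m - r), j ∈ (Finset.univ : Finset (Fin (m - r))) →
            ∀ j' : Fin (m - r), j' ∈ (Finset.univ : Finset (Fin (m - r))) →
            Fin.castLE hmn (⟨r + (j:ℕ), by omega⟩ : Fin m) =
              Fin.castLE hmn (⟨r + (j':ℕ), by omega⟩ : Fin m) → j = j' := by
          intro j _ j' _ h
          have : r + (j:ℕ) = r + (j':ℕ) := congrArg Fin.val h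
          exact Fin.ext (by omega)
        have himg := Finset.sum_image (f := fun i : Fin n => c i ^ 2) hinj
        calc ∑ j : Fin (m - r), c (Fin.castLE hmn (⟨r + (j:ℕ), by omega⟩ : Fin m)) ^ 2
            = ∑ i ∈ Finset.univ.image
                (fun j : Fin (m - r) => Fin.castLE hmn (⟨r + (j:ℕ), by omega⟩ : Fin m)),
                c i ^ 2 := himg.symm
          _ ≤ ∑ i, c i ^ 2 := Finset.sum_le_sum_of_subset_of_nonneg
              (Finset.subset_univ _) (fun i _ _ => sq_nonneg _)
      calc ∑ j, b j ^ 2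
          ≤ ∑ j : Fin (m - r), σ ⟨r, hr⟩ ^ 2 *
              c (Fin.castLE hmn (⟨r + (j:ℕ), by omega⟩ : Fin m)) ^ 2 :=
            Finset.sum_le_sum fun j _ => h1 j
        _ = σ ⟨r, hr⟩ ^ 2 * ∑ j : Fin (m - r),
              c (Fin.castLE hmn (⟨r + (j:ℕ), by omega⟩ : Fin m)) ^ 2 := by
            rw [Finset.mul_sum]
        _ ≤ σ ⟨r, hr⟩ ^ 2 * ∑ i, c i ^ 2 :=
            mul_le_mul_of_nonneg_left h2 (sq_nonneg _)
        _ ≤ σ ⟨r, hr⟩ ^ 2 * ∑ i, x i ^ 2 :=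
            mul_le_mul_of_nonneg_left hcx (sq_nonneg _)
    have hbnn : (0:ℝ) ≤ ∑ j, b j ^ 2 :=
      Finset.sum_nonneg fun j _ => sq_nonneg _
    calc ∑ i, ((Mᵀ * Q) *ᵥ x) i ^ 2 = ∑ i, (V *ᵥ w) i ^ 2 := by rw [hzw]
      _ = ∑ j, w j ^ 2 := orth_nsq V hV w
      _ = ∑ i, a i ^ 2 + ∑ j, b j ^ 2 := hsplit (fun j => w j ^ 2)
      _ ≤ (2 * (m:ℝ) / d) * ∑ j, b j ^ 2 + ∑ j, b j ^ 2 := add_le_add_left ha2 _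
      _ = (1 + 2 * (m:ℝ) / d) * ∑ j, b j ^ 2 := by ring
      _ ≤ (1 + 2 * (m:ℝ) / d) * (σ ⟨r, hr⟩ ^ 2 * ∑ i, x i ^ 2) :=
          mul_le_mul_of_nonneg_left hbb (by positivity)
      _ = K * ∑ i, x i ^ 2 := by rw [hK]; ring
  calc ‖M - P * M‖ ^ 2 = ‖Mᵀ * Q‖ ^ 2 := by rw [hnorm_eq]
    _ ≤ Real.sqrt K ^ 2 := pow_le_pow_left₀ (norm_nonneg _) hmain 2
    _ = K := Real.sq_sqrt hKnn
end

section
/- Let σ₁ ≥ … ≥ σ_m ≥ 0 and λ > 0, and define the numerical rank r(M,λ) = Σ_{i=1}^m σ_i²/(σ_i² + mnλ). If σ_r²/((σ_r² + mnλ) · r(M,λ)) ≥ a/r for some a > 0, then μ(λ) ≥ a·μ(r), where μ(r) and μ(λ) are the incoherence measures defined via the top-r singular subspaces and via Σ S^{−1/2} with S = Σ² + mnλ I, respectively. -/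
open Matrix

variable (n m : ℕ)

/-- Numerical rank `r(M, λ) = ∑ᵢ σᵢ² / (σᵢ² + mnλ)`. -/
noncomputable def numRank (σ : Fin m → ℝ) (lam : ℝ) : ℝ :=
  ∑ i, σ i ^ 2 / (σ i ^ 2 + m * n * lam)

/-- Generalized incoherence measure `μ(λ)` defined via `Σ S^{-1/2}`
with `S = Σ² + mnλ I`. -/
noncomputable def muLam (U : Matrix (Fin n) (Fin m) ℝ)
    (V : Matrix (Fin m) (Fin m) ℝ) (σ : Fin m → ℝ) (lam : ℝ) : ℝ :=
  max
    (⨆ i : Fin n, ((n : ℝ) / numRank n m σ lam) *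
      ∑ j, (U i j * σ j / Real.sqrt (σ j ^ 2 + m * n * lam)) ^ 2)
    (⨆ i : Fin m, ((m : ℝ) / numRank n m σ lam) *
      ∑ j, (V i j * σ j / Real.sqrt (σ j ^ 2 + m * n * lam)) ^ 2)

/-- Standard incoherence measure `μ(r)` of the top-`r` singular subspaces. -/
noncomputable def muR (U : Matrix (Fin n) (Fin m) ℝ)
    (V : Matrix (Fin m) (Fin m) ℝ) (r : ℕ) (hr : r ≤ m) : ℝ :=
  max
    (⨆ i : Fin n, ((n : ℝ) / r) * ∑ j : Fin r, (U i (Fin.castLE hr j)) ^ 2)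
    (⨆ i : Fin m, ((m : ℝ) / r) * ∑ j : Fin r, (V i (Fin.castLE hr j)) ^ 2)


lemma row_key {m r : ℕ} (hr0 : 0 < r) (hr : r ≤ m) (σ : Fin m → ℝ)
    (hσpos : ∀ i, 0 ≤ σ i) (hσdesc : Antitone σ)
    (c : ℝ) (hc : 0 < c) (R : ℝ) (hR : R = ∑ i, σ i ^ 2 / (σ i ^ 2 + c))
    (a : ℝ) (ha : 0 < a)
    (hkey : a / r ≤ σ ⟨r - 1, by omega⟩ ^ 2 / ((σ ⟨r - 1, by omega⟩ ^ 2 + c) * R))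
    (k : ℝ) (hk : 0 ≤ k) (w : Fin m → ℝ) :
    a * ((k / r) * ∑ j : Fin r, w (Fin.castLE hr j) ^ 2)
      ≤ (k / R) * ∑ j, (w j * σ j / Real.sqrt (σ j ^ 2 + c)) ^ 2 := by
  set i0 : Fin m := ⟨r - 1, by omega⟩
  have hr' : (0:ℝ) < r := by exact_mod_cast hr0
  have hSr : 0 < σ i0 ^ 2 + c := by nlinarith [sq_nonneg (σ i0)]
  have hR0 : 0 < R := by
    by_contra h
    push_neg at h
    have : σ i0 ^ 2 / ((σ i0 ^ 2 + c) * R) ≤ 0 :=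
      div_nonpos_of_nonneg_of_nonpos (sq_nonneg _) (by nlinarith)
    have : a / r ≤ 0 := le_trans hkey this
    nlinarith [div_pos ha hr']
  -- σ i0 ^2 / S_{i0} ≥ a R / r
  have hstep : a / r * R ≤ σ i0 ^ 2 / (σ i0 ^ 2 + c) := by
    have h2 : a / r ≤ σ i0 ^ 2 / (σ i0 ^ 2 + c) / R := by
      rwa [div_div]
    exact (le_div_iff₀ hR0).mp h2
  -- for each j with j.val < r, σ j ^2 / (σ j^2 + c) ≥ a R / r
  have hmono : ∀ j : Fin m, (j : ℕ) < r →
      a / r * R ≤ σ j ^ 2 / (σ j ^ 2 + c) := by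
    intro j hj
    refine le_trans hstep ?_
    have hle : σ i0 ≤ σ j := hσdesc (by simp [i0, Fin.le_def]; omega)
    have hsq : σ i0 ^ 2 ≤ σ j ^ 2 := by nlinarith [hσpos j, hσpos i0]
    have hSj : 0 < σ j ^ 2 + c := by nlinarith [sq_nonneg (σ j)]
    rw [div_le_div_iff₀ hSr hSj]
    nlinarith
  -- each summand rewrites
  have hterm : ∀ j : Fin m, (w j * σ j / Real.sqrt (σ j ^ 2 + c)) ^ 2
      = w j ^ 2 * (σ j ^ 2 / (σ j ^ 2 + c)) := by
    intro j
    have hSj : 0 < σ j ^ 2 + c := by nlinarith [sq_nonneg (σ j)]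
    rw [div_pow, Real.sq_sqrt hSj.le, mul_pow, mul_div_assoc]
  -- sum over Fin r of the terms
  have hsum1 : ∑ j : Fin r, (a / r * R) * w (Fin.castLE hr j) ^ 2
      ≤ ∑ j : Fin r, (w (Fin.castLE hr j) * σ (Fin.castLE hr j) /
          Real.sqrt (σ (Fin.castLE hr j) ^ 2 + c)) ^ 2 := by
    apply Finset.sum_le_sum
    intro j _
    rw [hterm]
    rw [mul_comm]
    exact mul_le_mul_of_nonneg_left (hmono _ (by simpa using j.isLt)) (sq_nonneg _)
  -- extend to sum over Fin m
  have hsum2 : ∑ j : Fin r, (w (Fin.castLE hr j) * σ (Fin.castLE hr j) /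
          Real.sqrt (σ (Fin.castLE hr j) ^ 2 + c)) ^ 2
      ≤ ∑ j, (w j * σ j / Real.sqrt (σ j ^ 2 + c)) ^ 2 := by
    have := Finset.sum_le_sum_of_subset_of_nonneg
      (s := (Finset.univ : Finset (Fin r)).map ⟨Fin.castLE hr, Fin.castLE_injective hr⟩)
      (t := Finset.univ)
      (f := fun j => (w j * σ j / Real.sqrt (σ j ^ 2 + c)) ^ 2)
      (Finset.subset_univ _) (fun j _ _ => sq_nonneg _)
    rwa [Finset.sum_map] at this
  have hfin : (a / r * R) * ∑ j : Fin r, w (Fin.castLE hr j) ^ 2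
      ≤ ∑ j, (w j * σ j / Real.sqrt (σ j ^ 2 + c)) ^ 2 := by
    rw [Finset.mul_sum]; exact le_trans hsum1 hsum2
  calc a * ((k / r) * ∑ j : Fin r, w (Fin.castLE hr j) ^ 2)
      = (k / R) * ((a / r * R) * ∑ j : Fin r, w (Fin.castLE hr j) ^ 2) := by
        field_simp
    _ ≤ (k / R) * ∑ j, (w j * σ j / Real.sqrt (σ j ^ 2 + c)) ^ 2 :=
        mul_le_mul_of_nonneg_left hfin (div_nonneg hk hR0.le)

lemma sup_step {N : ℕ} (hN : 0 < N) {a : ℝ} (ha : 0 < a) (f g : Fin N → ℝ)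
    (h : ∀ i, a * g i ≤ f i) : a * (⨆ i, g i) ≤ ⨆ i, f i := by
  haveI : Nonempty (Fin N) := ⟨⟨0, hN⟩⟩
  have hb : BddAbove (Set.range f) := (Set.finite_range f).bddAbove
  have h1 : (⨆ i, g i) ≤ (⨆ i, f i) / a :=
    ciSup_le fun i => (le_div_iff₀ ha).2
      (by rw [mul_comm]; exact le_trans (h i) (le_ciSup hb i))
  calc a * (⨆ i, g i) ≤ a * ((⨆ i, f i) / a) :=
        mul_le_mul_of_nonneg_left h1 ha.le
    _ = ⨆ i, f i := by field_simp

theorem muLam_lower_bounds_muR {n m r : ℕ} (hn : 0 < n) (hm : 0 < m)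
    (hr0 : 0 < r) (hr : r ≤ m)
    (U : Matrix (Fin n) (Fin m) ℝ) (V : Matrix (Fin m) (Fin m) ℝ)
    (hU : Uᵀ * U = 1) (hV : Vᵀ * V = 1)
    (σ : Fin m → ℝ) (hσpos : ∀ i, 0 ≤ σ i) (hσdesc : Antitone σ)
    (lam : ℝ) (hlam : 0 < lam) (a : ℝ) (ha : 0 < a)
    (hkey : σ ⟨r - 1, by omega⟩ ^ 2 /
        ((σ ⟨r - 1, by omega⟩ ^ 2 + m * n * lam) * numRank n m σ lam) ≥ a / r) :
    muLam n m U V σ lam ≥ a * muR n m U V r hr := by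

  have hc : (0:ℝ) < (m:ℝ) * n * lam := by positivity
  have hUside := fun i => row_key hr0 hr σ hσpos hσdesc ((m:ℝ) * n * lam) hc
    (numRank n m σ lam) rfl a ha hkey (n:ℝ) (by positivity) (U i)
  have hVside := fun i => row_key hr0 hr σ hσpos hσdesc ((m:ℝ) * n * lam) hc
    (numRank n m σ lam) rfl a ha hkey (m:ℝ) (by positivity) (V i)
  unfold muLam muR
  rw [mul_max_of_nonneg _ _ ha.le]
  apply max_le_max
  · exact sup_step hn ha _ _ fun i => hUside i
  · exact sup_step hm ha _ _ fun i => hVside i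
end
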